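/- Consider a square matrix $M$ of size $n_L$ with unit diagonal whose off-diagonal entry $m_{i,j}$ is nonzero only if edge $j$ follows edge $i$ in a directed graph, and suppose each such nonzero entry equals $(-1)^{1+w_{ij}+t_i} a_i$ where for every simple directed cycle $C=(e_{i_1},\dots,e_{i_{u+1}})$ of the graph the sum of the winding contributions $\sum_t w_{i_t i_{t+1}}$ is odd and the sum of the intersection contributions $\sum_t t_{i_t}$ is even. Then $\det M = \sum_{C \in \mathcal{C}} w(C)$, where the sum runs over all conservative flows $C$ (disjoint unions of simple directed cycles, including the empty flow with weight 1) and $w(C)$ is the product of the weights $a_i$ over edges of $C$. -/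
import Mathlib


open scoped Classical

/-- Let `M` be a square matrix with unit diagonal, whose off-diagonal entry
`M i j` is nonzero only if edge `j` follows edge `i` in a directed graph, in which case
`M i j = (-1)^(1 + w i j + t i) * a i`.  Assume that along every simple directed cycle
(i.e. every cyclic permutation all of whose non-fixed points follow their images) the total
winding `∑ w` is odd and the total intersection number `∑ t` is even.  Then `det M` equals
the sum, over all conservative flows (permutations each of whose non-fixed points follows its
image, i.e. disjoint unions of simple directed cycles, including the identity = empty flow with
weight `1`), of the product of the weights `a i` over the edges of the flow. -/
theorem det_eq_sum_conservative_flows (nL : ℕ) (M : Matrix (Fin nL) (Fin nL) ℝ)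
    (follows : Fin nL → Fin nL → Prop)
    (a : Fin nL → ℝ) (w : Fin nL → Fin nL → ℕ) (t : Fin nL → ℕ)
    (hdiag : ∀ i, M i i = 1)
    (hentry : ∀ i j, i ≠ j → follows i j → M i j = (-1 : ℝ) ^ (1 + w i j + t i) * a i)
    (hzero : ∀ i j, i ≠ j → ¬ follows i j → M i j = 0)
    (hcycle : ∀ τ : Equiv.Perm (Fin nL), τ.IsCycle →
      (∀ i, τ i ≠ i → follows i (τ i)) →
      (∑ i ∈ τ.support, w i (τ i)) % 2 = 1 ∧ (∑ i ∈ τ.support, t i) % 2 = 0) :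
    M.det = ∑ σ ∈ Finset.univ.filter
        (fun σ : Equiv.Perm (Fin nL) => ∀ i, σ i ≠ i → follows i (σ i)),
      ∏ i ∈ σ.support, a i := by
  have key : ∀ σ : Equiv.Perm (Fin nL), (∀ i, σ i ≠ i → follows i (σ i)) →
      ((Equiv.Perm.sign σ : ℤ) : ℝ) *
        (-1 : ℝ) ^ (σ.support.card + ∑ i ∈ σ.support, (w i (σ i) + t i)) = 1 := by
    intro σ
    induction σ using Equiv.Perm.cycle_induction_on with
    | base_one => intro _; simp
    | base_cycles τ hτ =>
      intro hf
      obtain ⟨hw, ht⟩ := hcycle τ hτ hf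
      have hodd : Odd (∑ i ∈ τ.support, (w i (τ i) + t i)) := by
        rw [Nat.odd_iff, Finset.sum_add_distrib]
        omega
      have hsign : ((Equiv.Perm.sign τ : ℤ) : ℝ) = -(-1 : ℝ) ^ τ.support.card := by
        rw [hτ.sign]; push_cast; ring
      rw [hsign, pow_add, Odd.neg_one_pow hodd]
      have : (-1 : ℝ) ^ τ.support.card * (-1 : ℝ) ^ τ.support.card = 1 := by
        rw [← pow_add]; exact Even.neg_one_pow ⟨τ.support.card, rfl⟩
      nlinarith [this]
    | induction_disjoint σ τ hdisj hσc ihσ ihτ =>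
      intro hf
      have happσ : ∀ i ∈ σ.support, (σ * τ) i = σ i := by
        intro i hi
        have hiτ : τ i = i := by
          rcases hdisj i with h | h
          · exact absurd h (Equiv.Perm.mem_support.mp hi)
          · exact h
        simp [Equiv.Perm.mul_apply, hiτ]
      have happτ : ∀ i ∈ τ.support, (σ * τ) i = τ i := by
        intro i hi
        have hτi : τ i ∈ τ.support := (Equiv.Perm.apply_mem_support).mpr hi
        have : σ (τ i) = τ i := by
          rcases hdisj (τ i) with h | h
          · exact h
          · exact absurd (τ.injective h) (Equiv.Perm.mem_support.mp hi)
        simpa [Equiv.Perm.mul_apply] using this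
      have hsupp : (σ * τ).support = σ.support ∪ τ.support := hdisj.support_mul
      have hfσ : ∀ i, σ i ≠ i → follows i (σ i) := by
        intro i hi
        have hmem : i ∈ σ.support := Equiv.Perm.mem_support.mpr hi
        have h1 : (σ * τ) i = σ i := happσ i hmem
        have := hf i (by rw [h1]; exact hi)
        rwa [h1] at this
      have hfτ : ∀ i, τ i ≠ i → follows i (τ i) := by
        intro i hi
        have hmem : i ∈ τ.support := Equiv.Perm.mem_support.mpr hi
        have h1 : (σ * τ) i = τ i := happτ i hmem
        have := hf i (by rw [h1]; exact hi)
        rwa [h1] at this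
      have hcard : (σ * τ).support.card = σ.support.card + τ.support.card := by
        rw [hsupp, Finset.card_union_of_disjoint hdisj.disjoint_support]
      have hsum : ∑ i ∈ (σ * τ).support, (w i ((σ * τ) i) + t i)
          = (∑ i ∈ σ.support, (w i (σ i) + t i)) + ∑ i ∈ τ.support, (w i (τ i) + t i) := by
        rw [hsupp, Finset.sum_union hdisj.disjoint_support]
        congr 1
        · exact Finset.sum_congr rfl fun i hi => by rw [happσ i hi]
        · exact Finset.sum_congr rfl fun i hi => by rw [happτ i hi]
      have hS := ihσ hfσ
      have hT := ihτ hfτ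
      rw [map_mul, hcard, hsum]
      push_cast
      have : (-1 : ℝ) ^ (σ.support.card + τ.support.card +
          ((∑ i ∈ σ.support, (w i (σ i) + t i)) + ∑ i ∈ τ.support, (w i (τ i) + t i)))
          = (-1 : ℝ) ^ (σ.support.card + ∑ i ∈ σ.support, (w i (σ i) + t i)) *
            (-1 : ℝ) ^ (τ.support.card + ∑ i ∈ τ.support, (w i (τ i) + t i)) := by
        rw [← pow_add]; ring_nf
      rw [this]
      nlinarith [hS, hT]
  rw [← Matrix.det_transpose, Matrix.det_apply]
  rw [Finset.sum_filter]
  apply Finset.sum_congr rfl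
  intro σ _
  by_cases hσ : ∀ i, σ i ≠ i → follows i (σ i)
  · rw [if_pos hσ]
    have hprod : ∏ i, M.transpose (σ i) i = ∏ i ∈ σ.support, M i (σ i) := by
      rw [← Finset.prod_subset (Finset.subset_univ σ.support)
        (fun i _ hi => ?_)]
      · exact Finset.prod_congr rfl fun i _ => rfl
      · have : σ i = i := by
          by_contra h
          exact hi (Equiv.Perm.mem_support.mpr h)
        simp [Matrix.transpose_apply, this, hdiag]
    have hprod2 : ∏ i ∈ σ.support, M i (σ i)
        = (-1 : ℝ) ^ (σ.support.card + ∑ i ∈ σ.support, (w i (σ i) + t i)) *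
          ∏ i ∈ σ.support, a i := by
      have : ∀ i ∈ σ.support, M i (σ i) = (-1 : ℝ) ^ (1 + (w i (σ i) + t i)) * a i := by
        intro i hi
        have hne : σ i ≠ i := Equiv.Perm.mem_support.mp hi
        rw [hentry i (σ i) (Ne.symm hne) (hσ i hne)]
        ring_nf
      rw [Finset.prod_congr rfl this, Finset.prod_mul_distrib,
        Finset.prod_pow_eq_pow_sum, Finset.sum_add_distrib, Finset.sum_const, smul_eq_mul,
        mul_one]
    rw [hprod, hprod2, Units.smul_def, zsmul_eq_mul]
    rw [← mul_assoc, key σ hσ, one_mul]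
  · rw [if_neg hσ]
    push_neg at hσ
    obtain ⟨i, hi, hnf⟩ := hσ
    have : M.transpose (σ i) i = 0 := by
      rw [Matrix.transpose_apply]
      exact hzero i (σ i) (Ne.symm hi) hnf
    have h0 : ∏ j, M.transpose (σ j) j = 0 :=
      Finset.prod_eq_zero (f := fun j => M.transpose (σ j) j) (Finset.mem_univ i) this
    rw [h0, smul_zero]
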